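/- Let s ≥ 1 and let I be a collection with centres c_1 ≤ … ≤ c_n and J a collection with centres c'_1 ≤ … ≤ c'_m, with c_n ≤ c'_1, such that I and J are each optimally equispaceable. Let x_2 be the largest global minimiser of the equispace function of I and y_1 the smallest global minimiser of the equispace function of J. Then the combined collection I ∪ J (with centres listed as c_1 ≤ … ≤ c_n ≤ c'_1 ≤ … ≤ c'_m) is optimally equispaceable if and only if y_1 ≤ x_2 + m·s. -/

import Mathlib

/-- Total moving distance of a moving-distance vector `d` for `n` intervals. -/
noncomputable def totalDist (n : ℕ) (d : ℕ → ℝ) : ℝ := ∑ i ∈ Finset.range n, |d i|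

/-- `d` is feasible for centres `c`: after moving, consecutive centres are ≥ s apart. -/
def Feasible (s : ℝ) (n : ℕ) (c d : ℕ → ℝ) : Prop :=
  ∀ i : ℕ, i + 1 < n → (c (i + 1) + d (i + 1)) - (c i + d i) ≥ s

/-- The equispace function `E(x) = ∑_{i=1}^n |x − c_i − (n−i)s|` (0-based indices). -/
noncomputable def equispaceFn (s : ℝ) (n : ℕ) (c : ℕ → ℝ) (x : ℝ) : ℝ :=
  ∑ i ∈ Finset.range n, |x - c i - ((n : ℝ) - 1 - (i : ℝ)) * s|

/-- The equispace vector `E_x`, moving the i-th centre to `x − (n−i)s` (0-based indices). -/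
noncomputable def equispaceVec (s : ℝ) (n : ℕ) (c : ℕ → ℝ) (x : ℝ) : ℕ → ℝ :=
  fun i => x - ((n : ℝ) - 1 - (i : ℝ)) * s - c i

/-- The collection is optimally equispaceable: for every global minimiser `x*` of `E`,
the equispace vector `E_{x*}` is feasible and attains the minimum total moving distance. -/
def OptimallyEquispaceable (s : ℝ) (n : ℕ) (c : ℕ → ℝ) : Prop :=
  ∀ x : ℝ, (∀ y : ℝ, equispaceFn s n c x ≤ equispaceFn s n c y) →
    Feasible s n c (equispaceVec s n c x) ∧
    ∀ d : ℕ → ℝ, Feasible s n c d →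
      totalDist n (equispaceVec s n c x) ≤ totalDist n d

/-- target points -/
noncomputable def aFn (s : ℝ) (n : ℕ) (c : ℕ → ℝ) (i : ℕ) : ℝ :=
  c i + ((n : ℝ) - 1 - (i : ℝ)) * s

lemma equis_eq (s : ℝ) (n : ℕ) (c : ℕ → ℝ) (x : ℝ) :
    equispaceFn s n c x = ∑ i ∈ Finset.range n, |x - aFn s n c i| := by
  unfold equispaceFn aFn
  exact Finset.sum_congr rfl fun i _ => by congr 1; ring

lemma td_equis (s : ℝ) (n : ℕ) (c : ℕ → ℝ) (x : ℝ) :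
    totalDist n (equispaceVec s n c x) = equispaceFn s n c x := by
  unfold totalDist equispaceVec equispaceFn
  exact Finset.sum_congr rfl fun i _ => by congr 1; ring

lemma feas_equis (s : ℝ) (n : ℕ) (c : ℕ → ℝ) (x : ℝ) :
    Feasible s n c (equispaceVec s n c x) := by
  intro i hi
  unfold equispaceVec
  have e : (c (i+1) + (x - ((n:ℝ) - 1 - ((i:ℕ)+1 : ℕ)) * s - c (i+1)))
      - (c i + (x - ((n:ℝ) - 1 - (i:ℝ)) * s - c i)) = s := by
    push_cast; ring
  rw [ge_iff_le]
  exact le_of_eq e.symm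

lemma equispace_combo (s : ℝ) (n : ℕ) (c : ℕ → ℝ) (u v a b : ℝ)
    (ha : 0 ≤ a) (hb : 0 ≤ b) (hab : a + b = 1) :
    equispaceFn s n c (a * u + b * v) ≤ a * equispaceFn s n c u + b * equispaceFn s n c v := by
  unfold equispaceFn
  rw [Finset.mul_sum, Finset.mul_sum, ← Finset.sum_add_distrib]
  refine Finset.sum_le_sum fun i _ => ?_
  have hb' : b = 1 - a := by linarith
  subst hb'
  have h1 : a * u + (1-a) * v - c i - ((n:ℝ) - 1 - (i:ℝ)) * s
      = a * (u - c i - ((n:ℝ) - 1 - (i:ℝ)) * s) + (1-a) * (v - c i - ((n:ℝ) - 1 - (i:ℝ)) * s) := by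
    ring
  rw [h1]
  calc |a * (u - c i - ((n:ℝ) - 1 - (i:ℝ)) * s) + (1-a) * (v - c i - ((n:ℝ) - 1 - (i:ℝ)) * s)|
      ≤ |a * (u - c i - ((n:ℝ) - 1 - (i:ℝ)) * s)| + |(1-a) * (v - c i - ((n:ℝ) - 1 - (i:ℝ)) * s)| :=
        abs_add_le _ _
    _ = a * |u - c i - ((n:ℝ) - 1 - (i:ℝ)) * s| + (1-a) * |v - c i - ((n:ℝ) - 1 - (i:ℝ)) * s| := by
        rw [abs_mul, abs_mul, abs_of_nonneg ha, abs_of_nonneg hb]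

/-- E is nonincreasing to the left of a minimiser. -/
lemma anti_below (s : ℝ) (n : ℕ) (c : ℕ → ℝ) (x2 : ℝ)
    (hmin : ∀ y, equispaceFn s n c x2 ≤ equispaceFn s n c y)
    {u v : ℝ} (huv : u ≤ v) (hv : v ≤ x2) :
    equispaceFn s n c v ≤ equispaceFn s n c u := by
  rcases eq_or_lt_of_le huv with rfl | huv
  · exact le_refl _
  rcases eq_or_lt_of_le hv with rfl | hv
  · exact hmin u
  have hxu : 0 < x2 - u := by linarith
  set t := (x2 - v) / (x2 - u) with ht
  have ht0 : 0 < t := div_pos (by linarith) hxu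
  have ht1 : t < 1 := by rw [ht, div_lt_one hxu]; linarith
  have hv' : t * u + (1 - t) * x2 = v := by
    field_simp [ht]
    have h : t * (x2 - u) = x2 - v := by rw [ht]; exact div_mul_cancel₀ _ hxu.ne'
    linear_combination -h
  have h := equispace_combo s n c u x2 t (1 - t) ht0.le (by linarith) (by ring)
  rw [hv'] at h
  have h2 := hmin v
  nlinarith [h, h2, ht0, ht1]

/-- E is nondecreasing to the right of a minimiser. -/
lemma mono_above (s : ℝ) (n : ℕ) (c : ℕ → ℝ) (y1 : ℝ)
    (hmin : ∀ y, equispaceFn s n c y1 ≤ equispaceFn s n c y)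
    {u v : ℝ} (huv : v ≤ u) (hv : y1 ≤ v) :
    equispaceFn s n c v ≤ equispaceFn s n c u := by
  rcases eq_or_lt_of_le huv with rfl | huv
  · exact le_refl _
  rcases eq_or_lt_of_le hv with rfl | hv
  · exact hmin u
  have hxu : 0 < u - y1 := by linarith
  set t := (v - y1) / (u - y1) with ht
  have ht0 : 0 < t := div_pos (by linarith) hxu
  have ht1 : t < 1 := by rw [ht, div_lt_one hxu]; linarith
  have hv' : t * u + (1 - t) * y1 = v := by
    field_simp [ht]
    have h : t * (u - y1) = v - y1 := by rw [ht]; exact div_mul_cancel₀ _ hxu.ne'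
    linear_combination h
  have h := equispace_combo s n c u y1 t (1 - t) ht0.le (by linarith) (by ring)
  rw [hv'] at h
  have h2 := hmin v
  nlinarith [h, h2, ht0, ht1]

lemma exists_min (s : ℝ) (n : ℕ) (hn : 0 < n) (c : ℕ → ℝ) :
    ∃ x : ℝ, ∀ y : ℝ, equispaceFn s n c x ≤ equispaceFn s n c y := by
  set f := equispaceFn s n c with hf
  have hcont : Continuous f := by
    rw [hf]; unfold equispaceFn
    exact continuous_finset_sum _ fun i _ =>
      ((continuous_id.sub continuous_const).sub continuous_const).abs
  set a0 : ℝ := c 0 + ((n : ℝ) - 1 - (0:ℝ)) * s with ha0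
  have hkey : ∀ y, |y - a0| ≤ f y := by
    intro y
    have h0 : (0:ℕ) ∈ Finset.range n := Finset.mem_range.mpr hn
    have h := Finset.single_le_sum
      (f := fun i : ℕ => |y - c i - ((n:ℝ) - 1 - (i:ℝ)) * s|)
      (fun i _ => abs_nonneg _) h0
    have e : |y - c 0 - ((n:ℝ) - 1 - ((0:ℕ):ℝ)) * s| = |y - a0| := by
      rw [ha0]; push_cast; congr 1; ring
    exact (le_of_eq e.symm).trans h
  set M := f a0 with hM
  have hM0 : 0 ≤ M := le_trans (by simp) (hkey a0)
  obtain ⟨x, hxK, hx⟩ := (isCompact_Icc (a := a0 - M - 1) (b := a0 + M + 1)).exists_isMinOn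
    ⟨a0, by constructor <;> linarith⟩ hcont.continuousOn
  refine ⟨x, fun y => ?_⟩
  by_cases hy : y ∈ Set.Icc (a0 - M - 1) (a0 + M + 1)
  · exact hx hy
  · have hfy : M + 1 ≤ |y - a0| := by
      rw [Set.mem_Icc] at hy
      push_neg at hy
      rcases le_or_gt (a0 - M - 1) y with h1 | h1
      · have := hy h1
        exact le_abs.mpr (Or.inl (by linarith))
      · exact le_abs.mpr (Or.inr (by linarith))
    have : f x ≤ M := hx (Set.mem_Icc.mpr ⟨by linarith, by linarith⟩)
    linarith [hkey y]

lemma abel_prefix (n : ℕ) (g χ : ℕ → ℝ)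
    (hanti : ∀ i, i + 1 < n → g (i+1) ≤ g i)
    (hlast : 0 < n → 0 ≤ g (n-1))
    (hpre : ∀ k, k ≤ n → 0 ≤ ∑ i ∈ Finset.range k, χ i) :
    0 ≤ ∑ i ∈ Finset.range n, g i * χ i := by
  induction n generalizing g with
  | zero => simp
  | succ n ih =>
    have hgn : 0 ≤ g n := by simpa using hlast n.succ_pos
    have h1 : 0 ≤ ∑ i ∈ Finset.range n, (g i - g n) * χ i := by
      refine ih (fun i => g i - g n) (fun i hi => ?_) (fun hn0 => ?_)
        (fun k hk => hpre k (by omega))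
      · have := hanti i (by omega)
        show g (i+1) - g n ≤ g i - g n
        linarith
      · have h := hanti (n-1) (by omega)
        rw [Nat.sub_add_cancel hn0] at h
        show 0 ≤ g (n-1) - g n
        linarith
    have h2 : 0 ≤ g n * ∑ i ∈ Finset.range (n+1), χ i :=
      mul_nonneg hgn (hpre (n+1) le_rfl)
    have e1 : ∑ i ∈ Finset.range n, (g i - g n) * χ i
        = (∑ i ∈ Finset.range n, g i * χ i) - g n * ∑ i ∈ Finset.range n, χ i := by
      rw [Finset.mul_sum, ← Finset.sum_sub_distrib]
      exact Finset.sum_congr rfl fun i _ => by ring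
    rw [e1] at h1
    have h2' : ∑ i ∈ Finset.range (n+1), χ i = (∑ i ∈ Finset.range n, χ i) + χ n :=
      Finset.sum_range_succ χ n
    rw [h2', mul_add] at h2
    rw [Finset.sum_range_succ]
    linarith

lemma abel_suffix (m : ℕ) (g χ : ℕ → ℝ)
    (hmono : ∀ i, i + 1 < m → g i ≤ g (i+1))
    (h0 : 0 < m → 0 ≤ g 0)
    (hsuf : ∀ k, k ≤ m → 0 ≤ ∑ i ∈ Finset.range (m - k), χ (k + i)) :
    0 ≤ ∑ i ∈ Finset.range m, g i * χ i := by
  induction m generalizing g χ with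
  | zero => simp
  | succ m ih =>
    have hg0 : 0 ≤ g 0 := h0 m.succ_pos
    have h1 : 0 ≤ ∑ i ∈ Finset.range m, (g (i+1) - g 0) * χ (i+1) := by
      refine ih (fun i => g (i+1) - g 0) (fun i => χ (i+1)) (fun i hi => ?_)
        (fun hm0 => ?_) (fun k hk => ?_)
      · have := hmono (i+1) (by omega)
        show g (i+1) - g 0 ≤ g (i+1+1) - g 0
        linarith
      · have := hmono 0 (by omega)
        show 0 ≤ g (0+1) - g 0
        linarith
      · have h := hsuf (k+1) (by omega)
        have e : ∑ i ∈ Finset.range (m + 1 - (k+1)), χ (k + 1 + i)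
            = ∑ i ∈ Finset.range (m - k), χ (k + i + 1) := by
          rw [Nat.succ_sub_succ]
          exact Finset.sum_congr rfl fun i _ => by congr 1; omega
        rw [e] at h
        exact h
    have h2 : 0 ≤ g 0 * ∑ i ∈ Finset.range (m+1), χ i := by
      refine mul_nonneg hg0 ?_
      have h := hsuf 0 (Nat.zero_le _)
      simpa using h
    have e2 : ∑ i ∈ Finset.range (m+1), (g i - g 0) * χ i
        = (∑ i ∈ Finset.range m, (g (i+1) - g 0) * χ (i+1)) + (g 0 - g 0) * χ 0 :=
      Finset.sum_range_succ' _ m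
    have e1 : ∑ i ∈ Finset.range (m+1), (g i - g 0) * χ i
        = (∑ i ∈ Finset.range (m+1), g i * χ i) - g 0 * ∑ i ∈ Finset.range (m+1), χ i := by
      rw [Finset.mul_sum, ← Finset.sum_sub_distrib]
      exact Finset.sum_congr rfl fun i _ => by ring
    rw [e1] at e2
    have : (g 0 - g 0) * χ 0 = 0 := by ring
    rw [this] at e2
    linarith

lemma prefix_sum_nonneg (s : ℝ) (n : ℕ) (c : ℕ → ℝ) (x2 : ℝ)
    (hopt : ∀ d : ℕ → ℝ, Feasible s n c d → equispaceFn s n c x2 ≤ totalDist n d)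
    (w : ℝ) (hw : w ≤ x2) (k : ℕ) (hk : k ≤ n) :
    0 ≤ ∑ i ∈ Finset.range k, (if w ≤ aFn s n c i then (1:ℝ) else -1) := by
  by_contra hneg
  push_neg at hneg
  have hex : ∃ i ∈ Finset.range k, aFn s n c i < w := by
    by_contra hall
    push_neg at hall
    have h : (0:ℝ) ≤ ∑ i ∈ Finset.range k, (if w ≤ aFn s n c i then (1:ℝ) else -1) :=
      Finset.sum_nonneg fun i hi => by rw [if_pos (hall i hi)]; norm_num
    exact absurd h (not_le.mpr hneg)
  set S := (Finset.range k).filter (fun i => aFn s n c i < w) with hS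
  have hSne : ((S.image (aFn s n c))).Nonempty := by
    obtain ⟨i, hi, hlt⟩ := hex
    exact ⟨aFn s n c i, Finset.mem_image_of_mem _ (Finset.mem_filter.mpr ⟨hi, hlt⟩)⟩
  set v0 := (S.image (aFn s n c)).max' hSne with hv0def
  have hv0w : v0 < w := by
    have hmem := (S.image (aFn s n c)).max'_mem hSne
    rw [Finset.mem_image] at hmem
    obtain ⟨i, hi, he⟩ := hmem
    rw [hv0def, ← he]
    exact (Finset.mem_filter.mp hi).2
  have hv0 : ∀ i ∈ Finset.range k, aFn s n c i < w → aFn s n c i ≤ v0 := fun i hi hlt =>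
    Finset.le_max' _ _ (Finset.mem_image_of_mem _ (Finset.mem_filter.mpr ⟨hi, hlt⟩))
  set B : ℕ → ℝ := fun i => if i < k then v0 else x2 with hB
  set d : ℕ → ℝ := fun i => B i - ((n:ℝ)-1-(i:ℝ)) * s - c i with hd
  have hBmono : ∀ i : ℕ, B i ≤ B (i+1) := by
    intro i
    simp only [hB]
    by_cases h1 : i + 1 < k
    · rw [if_pos (by omega), if_pos h1]
    · rw [if_neg h1]
      by_cases h2 : i < k
      · rw [if_pos h2]; linarith
      · rw [if_neg h2]
  have hfeas : Feasible s n c d := by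
    intro i hi
    have e : (c (i+1) + d (i+1)) - (c i + d i) = (B (i+1) - B i) + s := by
      simp only [hd]; push_cast; ring
    rw [ge_iff_le, e]
    linarith [hBmono i]
  have hcost : totalDist n d = (∑ i ∈ Finset.range k, |v0 - aFn s n c i|)
      + ∑ i ∈ Finset.Ico k n, |x2 - aFn s n c i| := by
    unfold totalDist
    have e1 : ∀ i : ℕ, |d i| = |B i - aFn s n c i| := by
      intro i; simp only [hd]; unfold aFn; congr 1; ring
    rw [Finset.range_eq_Ico, ← Finset.sum_Ico_consecutive _ (Nat.zero_le k) hk]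
    congr 1
    · rw [← Finset.range_eq_Ico]
      refine Finset.sum_congr rfl fun i hi => ?_
      rw [e1 i]
      simp only [hB]
      rw [if_pos (Finset.mem_range.mp hi)]
    · refine Finset.sum_congr rfl fun i hi => ?_
      rw [e1 i]
      simp only [hB]
      rw [if_neg (by have := (Finset.mem_Ico.mp hi).1; omega)]
  have hE2 : equispaceFn s n c x2 = (∑ i ∈ Finset.range k, |x2 - aFn s n c i|)
      + ∑ i ∈ Finset.Ico k n, |x2 - aFn s n c i| := by
    rw [equis_eq, Finset.range_eq_Ico, ← Finset.sum_Ico_consecutive _ (Nat.zero_le k) hk,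
      ← Finset.range_eq_Ico]
  have hterm : ∀ i ∈ Finset.range k,
      |v0 - aFn s n c i| ≤ |x2 - aFn s n c i|
        + (x2 - v0) * (if w ≤ aFn s n c i then (1:ℝ) else -1) := by
    intro i hi
    by_cases hwa : w ≤ aFn s n c i
    · rw [if_pos hwa]
      have h1 : |v0 - aFn s n c i| ≤ |v0 - x2| + |x2 - aFn s n c i| := abs_sub_le _ _ _
      have h2 : |v0 - x2| = x2 - v0 := by
        rw [abs_sub_comm]; exact abs_of_nonneg (by linarith)
      linarith
    · rw [if_neg hwa]
      push_neg at hwa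
      have hle := hv0 i hi hwa
      rw [abs_of_nonneg (by linarith : (0:ℝ) ≤ v0 - aFn s n c i),
          abs_of_nonneg (by linarith : (0:ℝ) ≤ x2 - aFn s n c i)]
      linarith
  have hsum := Finset.sum_le_sum hterm
  rw [Finset.sum_add_distrib, ← Finset.mul_sum] at hsum
  have hneg2 : (x2 - v0) * (∑ i ∈ Finset.range k, (if w ≤ aFn s n c i then (1:ℝ) else -1)) < 0 :=
    mul_neg_of_pos_of_neg (by linarith) hneg
  have hfin := hopt d hfeas
  rw [hcost, hE2] at hfin
  linarith

lemma suffix_sum_nonneg (s : ℝ) (m : ℕ) (c' : ℕ → ℝ) (y1 : ℝ)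
    (hopt : ∀ d : ℕ → ℝ, Feasible s m c' d → equispaceFn s m c' y1 ≤ totalDist m d)
    (w : ℝ) (hw : y1 ≤ w) (k : ℕ) (hk : k ≤ m) :
    0 ≤ ∑ i ∈ Finset.range (m - k), (if aFn s m c' (k + i) ≤ w then (1:ℝ) else -1) := by
  have eIco : ∑ i ∈ Finset.Ico k m, (if aFn s m c' i ≤ w then (1:ℝ) else -1)
      = ∑ i ∈ Finset.range (m - k), (if aFn s m c' (k + i) ≤ w then (1:ℝ) else -1) :=
    Finset.sum_Ico_eq_sum_range _ _ _
  rw [← eIco]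
  by_contra hneg
  push_neg at hneg
  have hex : ∃ i ∈ Finset.Ico k m, w < aFn s m c' i := by
    by_contra hall
    push_neg at hall
    have h : (0:ℝ) ≤ ∑ i ∈ Finset.Ico k m, (if aFn s m c' i ≤ w then (1:ℝ) else -1) :=
      Finset.sum_nonneg fun i hi => by rw [if_pos (hall i hi)]; norm_num
    exact absurd h (not_le.mpr hneg)
  set S := (Finset.Ico k m).filter (fun i => w < aFn s m c' i) with hS
  have hSne : ((S.image (aFn s m c'))).Nonempty := by
    obtain ⟨i, hi, hlt⟩ := hex
    exact ⟨aFn s m c' i, Finset.mem_image_of_mem _ (Finset.mem_filter.mpr ⟨hi, hlt⟩)⟩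
  set v0 := (S.image (aFn s m c')).min' hSne with hv0def
  have hv0w : w < v0 := by
    have hmem := (S.image (aFn s m c')).min'_mem hSne
    rw [Finset.mem_image] at hmem
    obtain ⟨i, hi, he⟩ := hmem
    rw [hv0def, ← he]
    exact (Finset.mem_filter.mp hi).2
  have hv0 : ∀ i ∈ Finset.Ico k m, w < aFn s m c' i → v0 ≤ aFn s m c' i := fun i hi hlt =>
    Finset.min'_le _ _ (Finset.mem_image_of_mem _ (Finset.mem_filter.mpr ⟨hi, hlt⟩))
  set B : ℕ → ℝ := fun i => if i < k then y1 else v0 with hB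
  set d : ℕ → ℝ := fun i => B i - ((m:ℝ)-1-(i:ℝ)) * s - c' i with hd
  have hBmono : ∀ i : ℕ, B i ≤ B (i+1) := by
    intro i
    simp only [hB]
    by_cases h1 : i + 1 < k
    · rw [if_pos (by omega), if_pos h1]
    · rw [if_neg h1]
      by_cases h2 : i < k
      · rw [if_pos h2]; linarith
      · rw [if_neg h2]
  have hfeas : Feasible s m c' d := by
    intro i hi
    have e : (c' (i+1) + d (i+1)) - (c' i + d i) = (B (i+1) - B i) + s := by
      simp only [hd]; push_cast; ring
    rw [ge_iff_le, e]
    linarith [hBmono i]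
  have hcost : totalDist m d = (∑ i ∈ Finset.range k, |y1 - aFn s m c' i|)
      + ∑ i ∈ Finset.Ico k m, |v0 - aFn s m c' i| := by
    unfold totalDist
    have e1 : ∀ i : ℕ, |d i| = |B i - aFn s m c' i| := by
      intro i; simp only [hd]; unfold aFn; congr 1; ring
    rw [Finset.range_eq_Ico, ← Finset.sum_Ico_consecutive _ (Nat.zero_le k) hk]
    congr 1
    · rw [← Finset.range_eq_Ico]
      refine Finset.sum_congr rfl fun i hi => ?_
      rw [e1 i]
      simp only [hB]
      rw [if_pos (Finset.mem_range.mp hi)]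
    · refine Finset.sum_congr rfl fun i hi => ?_
      rw [e1 i]
      simp only [hB]
      rw [if_neg (by have := (Finset.mem_Ico.mp hi).1; omega)]
  have hE2 : equispaceFn s m c' y1 = (∑ i ∈ Finset.range k, |y1 - aFn s m c' i|)
      + ∑ i ∈ Finset.Ico k m, |y1 - aFn s m c' i| := by
    rw [equis_eq, Finset.range_eq_Ico, ← Finset.sum_Ico_consecutive _ (Nat.zero_le k) hk,
      ← Finset.range_eq_Ico]
  have hterm : ∀ i ∈ Finset.Ico k m,
      |v0 - aFn s m c' i| ≤ |y1 - aFn s m c' i|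
        + (v0 - y1) * (if aFn s m c' i ≤ w then (1:ℝ) else -1) := by
    intro i hi
    by_cases hwa : aFn s m c' i ≤ w
    · rw [if_pos hwa]
      have h1 : |v0 - aFn s m c' i| ≤ |v0 - y1| + |y1 - aFn s m c' i| := abs_sub_le _ _ _
      have h2 : |v0 - y1| = v0 - y1 := abs_of_nonneg (by linarith)
      linarith
    · rw [if_neg hwa]
      push_neg at hwa
      have hle := hv0 i hi hwa
      rw [abs_of_nonpos (by linarith : v0 - aFn s m c' i ≤ 0),
          abs_of_nonpos (by linarith : y1 - aFn s m c' i ≤ 0)]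
      linarith
  have hsum := Finset.sum_le_sum hterm
  rw [Finset.sum_add_distrib, ← Finset.mul_sum] at hsum
  have hneg2 : (v0 - y1) * (∑ i ∈ Finset.Ico k m, (if aFn s m c' i ≤ w then (1:ℝ) else -1)) < 0 :=
    mul_neg_of_pos_of_neg (by linarith) hneg
  have hfin := hopt d hfeas
  rw [hcost, hE2] at hfin
  linarith

lemma lemL (s : ℝ) (n : ℕ) (hn : 0 < n) (c : ℕ → ℝ) (x2 : ℝ)
    (hopt : ∀ d : ℕ → ℝ, Feasible s n c d → equispaceFn s n c x2 ≤ totalDist n d)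
    (d : ℕ → ℝ) (hd : Feasible s n c d)
    (hw : c (n-1) + d (n-1) ≤ x2) :
    equispaceFn s n c (c (n-1) + d (n-1)) ≤ totalDist n d := by
  set w := c (n-1) + d (n-1) with hwdef
  set ψ : ℕ → ℝ := fun i => c i + d i + ((n:ℝ)-1-(i:ℝ)) * s with hψ
  have hstep : ∀ i, i + 1 < n → ψ i ≤ ψ (i+1) := by
    intro i hi
    have hgap := hd i hi
    show c i + d i + ((n:ℝ)-1-(i:ℝ)) * s ≤ c (i+1) + d (i+1) + ((n:ℝ)-1-((i+1:ℕ):ℝ)) * s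
    have e : ((n:ℝ)-1-((i+1:ℕ):ℝ)) * s = ((n:ℝ)-1-(i:ℝ)) * s - s := by push_cast; ring
    rw [e]
    linarith
  have hmono : ∀ i j, i ≤ j → j < n → ψ i ≤ ψ j := by
    intro i j hij hjn
    induction j, hij using Nat.le_induction with
    | base => exact le_refl _
    | succ j hij ih => exact le_trans (ih (by omega)) (hstep j hjn)
  have hlast : ψ (n-1) = w := by
    show c (n-1) + d (n-1) + ((n:ℝ)-1-((n-1:ℕ):ℝ)) * s = w
    rw [Nat.cast_sub (by omega : 1 ≤ n), hwdef]
    push_cast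
    ring
  have hψle : ∀ i, i < n → ψ i ≤ w := fun i hi =>
    hlast ▸ hmono i (n-1) (by omega) (by omega)
  have habel : 0 ≤ ∑ i ∈ Finset.range n,
      (w - ψ i) * (if w ≤ aFn s n c i then (1:ℝ) else -1) := by
    refine abel_prefix n _ _ (fun i hi => ?_) (fun h0 => ?_)
      (fun k hk => prefix_sum_nonneg s n c x2 hopt w hw k hk)
    · have := hstep i hi
      show w - ψ (i+1) ≤ w - ψ i
      linarith
    · show 0 ≤ w - ψ (n-1)
      rw [hlast]
      linarith
  have hterm : ∀ i ∈ Finset.range n,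
      |w - aFn s n c i| + (w - ψ i) * (if w ≤ aFn s n c i then (1:ℝ) else -1)
        ≤ |ψ i - aFn s n c i| := by
    intro i hi
    have hψi := hψle i (Finset.mem_range.mp hi)
    by_cases hwa : w ≤ aFn s n c i
    · rw [if_pos hwa,
        abs_of_nonpos (by linarith : w - aFn s n c i ≤ 0),
        abs_of_nonpos (by linarith : ψ i - aFn s n c i ≤ 0)]
      linarith
    · rw [if_neg hwa]
      push_neg at hwa
      have h1 : ψ i - aFn s n c i ≤ |ψ i - aFn s n c i| := le_abs_self _
      rw [abs_of_nonneg (by linarith : (0:ℝ) ≤ w - aFn s n c i)]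
      linarith
  have hsum := Finset.sum_le_sum hterm
  rw [Finset.sum_add_distrib] at hsum
  have hTD : totalDist n d = ∑ i ∈ Finset.range n, |ψ i - aFn s n c i| := by
    unfold totalDist
    refine Finset.sum_congr rfl fun i _ => ?_
    simp only [hψ]
    unfold aFn
    congr 1
    ring
  rw [equis_eq, hTD]
  linarith

lemma lemL' (s : ℝ) (m : ℕ) (hm : 0 < m) (c' : ℕ → ℝ) (y1 : ℝ)
    (hopt : ∀ d : ℕ → ℝ, Feasible s m c' d → equispaceFn s m c' y1 ≤ totalDist m d)
    (d : ℕ → ℝ) (hd : Feasible s m c' d)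
    (hw : y1 ≤ c' 0 + d 0 + ((m:ℝ)-1) * s) :
    equispaceFn s m c' (c' 0 + d 0 + ((m:ℝ)-1) * s) ≤ totalDist m d := by
  set w := c' 0 + d 0 + ((m:ℝ)-1) * s with hwdef
  set ψ : ℕ → ℝ := fun i => c' i + d i + ((m:ℝ)-1-(i:ℝ)) * s with hψ
  have hstep : ∀ i, i + 1 < m → ψ i ≤ ψ (i+1) := by
    intro i hi
    have hgap := hd i hi
    show c' i + d i + ((m:ℝ)-1-(i:ℝ)) * s ≤ c' (i+1) + d (i+1) + ((m:ℝ)-1-((i+1:ℕ):ℝ)) * s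
    have e : ((m:ℝ)-1-((i+1:ℕ):ℝ)) * s = ((m:ℝ)-1-(i:ℝ)) * s - s := by push_cast; ring
    rw [e]
    linarith
  have hmono : ∀ i j, i ≤ j → j < m → ψ i ≤ ψ j := by
    intro i j hij hjn
    induction j, hij using Nat.le_induction with
    | base => exact le_refl _
    | succ j hij ih => exact le_trans (ih (by omega)) (hstep j hjn)
  have hfirst : ψ 0 = w := by
    show c' 0 + d 0 + ((m:ℝ)-1-((0:ℕ):ℝ)) * s = w
    rw [hwdef]
    push_cast
    ring
  have hψge : ∀ i, i < m → w ≤ ψ i := fun i hi =>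
    hfirst ▸ hmono 0 i (by omega) hi
  have habel : 0 ≤ ∑ i ∈ Finset.range m,
      (ψ i - w) * (if aFn s m c' i ≤ w then (1:ℝ) else -1) := by
    refine abel_suffix m _ _ (fun i hi => ?_) (fun h0 => ?_)
      (fun k hk => suffix_sum_nonneg s m c' y1 hopt w hw k hk)
    · have := hstep i hi
      show ψ i - w ≤ ψ (i+1) - w
      linarith
    · show 0 ≤ ψ 0 - w
      rw [hfirst]
      linarith
  have hterm : ∀ i ∈ Finset.range m,
      |w - aFn s m c' i| + (ψ i - w) * (if aFn s m c' i ≤ w then (1:ℝ) else -1)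
        ≤ |ψ i - aFn s m c' i| := by
    intro i hi
    have hψi := hψge i (Finset.mem_range.mp hi)
    by_cases hwa : aFn s m c' i ≤ w
    · rw [if_pos hwa,
        abs_of_nonneg (by linarith : (0:ℝ) ≤ w - aFn s m c' i),
        abs_of_nonneg (by linarith : (0:ℝ) ≤ ψ i - aFn s m c' i)]
      linarith
    · rw [if_neg hwa]
      push_neg at hwa
      have h1 : -(ψ i - aFn s m c' i) ≤ |ψ i - aFn s m c' i| := neg_le_abs _
      rw [abs_of_nonpos (by linarith : w - aFn s m c' i ≤ 0)]
      linarith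
  have hsum := Finset.sum_le_sum hterm
  rw [Finset.sum_add_distrib] at hsum
  have hTD : totalDist m d = ∑ i ∈ Finset.range m, |ψ i - aFn s m c' i| := by
    unfold totalDist
    refine Finset.sum_congr rfl fun i _ => ?_
    simp only [hψ]
    unfold aFn
    congr 1
    ring
  rw [equis_eq, hTD]
  linarith

lemma td_split (n m : ℕ) (d : ℕ → ℝ) :
    totalDist (n+m) d = totalDist n d + totalDist m (fun j => d (n+j)) :=
  Finset.sum_range_add (fun i => |d i|) n m

lemma bsplit (s : ℝ) (n m : ℕ) (c c' : ℕ → ℝ) (x : ℝ) :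
    equispaceFn s (n+m) (fun i => if i < n then c i else c' (i - n)) x
      = equispaceFn s n c (x - (m:ℝ)*s) + equispaceFn s m c' x := by
  unfold equispaceFn
  rw [Finset.sum_range_add]
  congr 1
  · refine Finset.sum_congr rfl fun i hi => ?_
    have hi' := Finset.mem_range.mp hi
    simp only [if_pos hi']
    congr 1
    push_cast
    ring
  · refine Finset.sum_congr rfl fun i _ => ?_
    simp only [if_neg (by omega : ¬ (n + i < n))]
    have e : n + i - n = i := by omega
    rw [e]
    congr 1
    push_cast
    ring


/-- For optimally equispaceable collections `I` (centres `c`, size `n`) and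
`J` (centres `c'`, size `m`) with `c_n ≤ c'_1`, the combined collection `I ∪ J` is optimally
equispaceable iff `y₁ ≤ x₂ + m·s`, where `x₂` is the largest global minimiser of the equispace
function of `I` and `y₁` the smallest global minimiser of that of `J`. -/
theorem union_optimally_equispaceable_iff (s : ℝ) (hs : 1 ≤ s) (n m : ℕ)
    (hn : 1 ≤ n) (hm : 1 ≤ m) (c c' : ℕ → ℝ)
    (hc : ∀ i : ℕ, i + 1 < n → c i ≤ c (i + 1))
    (hc' : ∀ i : ℕ, i + 1 < m → c' i ≤ c' (i + 1))
    (hcc' : c (n - 1) ≤ c' 0)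
    (hI : OptimallyEquispaceable s n c)
    (hJ : OptimallyEquispaceable s m c')
    (x2 y1 : ℝ)
    (hx2min : ∀ y : ℝ, equispaceFn s n c x2 ≤ equispaceFn s n c y)
    (hx2top : ∀ z : ℝ, (∀ y : ℝ, equispaceFn s n c z ≤ equispaceFn s n c y) → z ≤ x2)
    (hy1min : ∀ y : ℝ, equispaceFn s m c' y1 ≤ equispaceFn s m c' y)
    (hy1bot : ∀ z : ℝ, (∀ y : ℝ, equispaceFn s m c' z ≤ equispaceFn s m c' y) → y1 ≤ z) :
    OptimallyEquispaceable s (n + m) (fun i => if i < n then c i else c' (i - n)) ↔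
      y1 ≤ x2 + (m : ℝ) * s := by
  set b : ℕ → ℝ := fun i => if i < n then c i else c' (i - n) with hb
  have hoptI : ∀ d : ℕ → ℝ, Feasible s n c d → equispaceFn s n c x2 ≤ totalDist n d := by
    intro d hd
    have h := (hI x2 hx2min).2 d hd
    rwa [td_equis] at h
  have hoptJ : ∀ d : ℕ → ℝ, Feasible s m c' d → equispaceFn s m c' y1 ≤ totalDist m d := by
    intro d hd
    have h := (hJ y1 hy1min).2 d hd
    rwa [td_equis] at h
  constructor
  · -- combined OE → condition
    intro hOE
    by_contra hlt
    push_neg at hlt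
    obtain ⟨x, hxmin⟩ := exists_min s (n+m) (by omega) b
    set d0 : ℕ → ℝ := fun i => if i < n then equispaceVec s n c x2 i
        else equispaceVec s m c' y1 (i - n) with hd0
    have hfeas : Feasible s (n+m) b d0 := by
      intro i hi
      by_cases h1 : i + 1 < n
      · have h2 : i < n := by omega
        show (b (i+1) + d0 (i+1)) - (b i + d0 i) ≥ s
        simp only [hb, hd0, if_pos h1, if_pos h2]
        exact feas_equis s n c x2 i h1
      · by_cases h2 : i < n
        · -- seam
          have hin : i + 1 = n := by omega
          show (b (i+1) + d0 (i+1)) - (b i + d0 i) ≥ s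
          simp only [hb, hd0, if_neg h1, if_pos h2]
          have e1 : i + 1 - n = 0 := by omega
          rw [e1]
          unfold equispaceVec
          have ei : (i:ℝ) + 1 = (n:ℝ) := by exact_mod_cast congrArg (Nat.cast (R := ℝ)) hin
          have e4 : ((n:ℝ)-1-(i:ℝ)) * s = 0 := by
            have : (n:ℝ)-1-(i:ℝ) = 0 := by linarith
            rw [this, zero_mul]
          have e3 : ((m:ℝ)-1-((0:ℕ):ℝ))*s = (m:ℝ)*s - s := by push_cast; ring
          rw [e3, e4]
          have := hlt
          show (c' 0 + (y1 - ((m:ℝ)*s - s) - c' 0)) - (c i + (x2 - 0 - c i)) ≥ s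
          linarith
        · -- both in J
          obtain ⟨j, rfl⟩ : ∃ j, i = n + j := ⟨i - n, by omega⟩
          show (b (n+j+1) + d0 (n+j+1)) - (b (n+j) + d0 (n+j)) ≥ s
          simp only [hb, hd0, if_neg h1, if_neg h2]
          have e1 : n + j - n = j := by omega
          have e2 : n + j + 1 - n = j + 1 := by omega
          rw [e1, e2]
          exact feas_equis s m c' y1 j (by omega)
    have hkey := (hOE x hxmin).2 d0 hfeas
    rw [td_equis] at hkey
    have hcost : totalDist (n+m) d0 = equispaceFn s n c x2 + equispaceFn s m c' y1 := by
      rw [td_split]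
      congr 1
      · rw [← td_equis s n c x2]
        unfold totalDist
        refine Finset.sum_congr rfl fun i hi => ?_
        have hi' := Finset.mem_range.mp hi
        simp only [hd0, if_pos hi']
      · rw [← td_equis s m c' y1]
        unfold totalDist
        refine Finset.sum_congr rfl fun j _ => ?_
        simp only [hd0, if_neg (by omega : ¬ (n + j < n))]
        have e : n + j - n = j := by omega
        rw [e]
    rw [hcost, hb, bsplit s n m c c' x] at hkey
    have h1 : equispaceFn s n c x2 ≤ equispaceFn s n c (x - (m:ℝ)*s) := hx2min _
    have h2 : equispaceFn s m c' y1 ≤ equispaceFn s m c' x := hy1min _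
    have hminI : ∀ y, equispaceFn s n c (x - (m:ℝ)*s) ≤ equispaceFn s n c y := by
      intro y
      have := hx2min y
      linarith
    have hminJ : ∀ y, equispaceFn s m c' x ≤ equispaceFn s m c' y := by
      intro y
      have := hx2min ((y:ℝ))
      have := hy1min y
      linarith
    have ha := hx2top _ hminI
    have hbb := hy1bot _ hminJ
    linarith
  · -- condition → combined OE
    intro hcond x hxmin
    refine ⟨feas_equis _ _ _ _, ?_⟩
    intro d hd
    rw [td_equis]
    have hfI : Feasible s n c d := by
      intro i hi
      have h := hd i (by omega)
      simp only [hb] at h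
      rw [if_pos hi, if_pos (show i < n by omega)] at h
      exact h
    set dJ : ℕ → ℝ := fun j => d (n+j) with hdJ
    have hfJ : Feasible s m c' dJ := by
      intro j hj
      have h := hd (n+j) (by omega)
      simp only [hb] at h
      rw [if_neg (by omega : ¬ (n+j+1 < n)), if_neg (by omega : ¬ (n+j < n))] at h
      have e1 : n + j + 1 - n = j + 1 := by omega
      have e2 : n + j - n = j := by omega
      rw [e1, e2] at h
      exact h
    set wI := c (n-1) + d (n-1) with hwI
    set wJ := c' 0 + dJ 0 + ((m:ℝ)-1) * s with hwJ
    have hIb : equispaceFn s n c (min wI x2) ≤ totalDist n d := by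
      rcases le_total wI x2 with h | h
      · rw [min_eq_left h]
        exact lemL s n (by omega) c x2 hoptI d hfI h
      · rw [min_eq_right h]
        exact hoptI d hfI
    have hJb : equispaceFn s m c' (max wJ y1) ≤ totalDist m dJ := by
      rcases le_total y1 wJ with h | h
      · rw [max_eq_left h]
        exact lemL' s m (by omega) c' y1 hoptJ dJ hfJ h
      · rw [max_eq_right h]
        exact hoptJ dJ hfJ
    have hseam : wI + (m:ℝ)*s ≤ wJ := by
      have h := hd (n-1) (by omega)
      have e0 : n - 1 + 1 = n := by omega
      rw [e0] at h
      simp only [hb] at h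
      rw [if_neg (by omega : ¬ (n < n)), if_pos (by omega : n - 1 < n)] at h
      have e1 : n - n = 0 := by omega
      rw [e1] at h
      have e2 : ((m:ℝ)-1)*s = (m:ℝ)*s - s := by ring
      show c (n-1) + d (n-1) + (m:ℝ)*s ≤ c' 0 + dJ 0 + ((m:ℝ)-1)*s
      have e3 : dJ 0 = d n := by
        simp only [hdJ]
        norm_num
      rw [e2, e3]
      linarith
    set u := max y1 (min (wI + (m:ℝ)*s) (x2 + (m:ℝ)*s)) with hu
    have hEI : equispaceFn s n c (u - (m:ℝ)*s) ≤ equispaceFn s n c (min wI x2) := by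
      refine anti_below s n c x2 hx2min ?_ ?_
      · have h1 : min wI x2 + (m:ℝ)*s ≤ min (wI + (m:ℝ)*s) (x2 + (m:ℝ)*s) :=
          le_min (add_le_add_left (min_le_left _ _) _) (add_le_add_left (min_le_right _ _) _)
        have h2 : min (wI + (m:ℝ)*s) (x2 + (m:ℝ)*s) ≤ u := le_max_right _ _
        linarith
      · have h1 : u ≤ x2 + (m:ℝ)*s := max_le hcond (min_le_right _ _)
        linarith
    have hEJ : equispaceFn s m c' u ≤ equispaceFn s m c' (max wJ y1) := by
      refine mono_above s m c' y1 hy1min ?_ (le_max_left _ _)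
      refine max_le (le_max_right _ _) ?_
      exact le_trans (min_le_left _ _) (le_trans hseam (le_max_left _ _))
    calc equispaceFn s (n+m) b x ≤ equispaceFn s (n+m) b u := hxmin u
      _ = equispaceFn s n c (u - (m:ℝ)*s) + equispaceFn s m c' u := bsplit s n m c c' u
      _ ≤ equispaceFn s n c (min wI x2) + equispaceFn s m c' (max wJ y1) := add_le_add hEI hEJ
      _ ≤ totalDist n d + totalDist m dJ := add_le_add hIb hJb
      _ = totalDist (n+m) d := (td_split n m d).symm
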